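/- Let K₁ and K₀ be finite measures on ℝ^d, let M = (1/2)·(K₁ + K₀), and let f : ℝ^d → ℝ be measurable with 0 ≤ f(z) ≤ 2, such that K₁ = M.withDensity f and K₀ = M.withDensity (2 − f). Fix p with 0 < p < 1, set K̄_p = p·K₁ + (1−p)·K₀ and j_p(z) = p·f(z)/(p·f(z) + (1−p)·(2−f(z))) − p. Then ∫ min( j_p(z)² + ‖z‖², 1 ) dK̄_p(z) ≤ 4·∫ (1 − √(f(z)·(2−f(z)))) dK̄_p(z) + 2·∫ min(‖z‖², 1) dK̄_p(z). -/

import Mathlib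

open MeasureTheory
open scoped ENNReal

/-- Let `K₁`, `K₀` be finite measures on `ℝ^d`, `M = (1/2)·(K₁+K₀)`,
`f : ℝ^d → ℝ` measurable with `0 ≤ f ≤ 2`, `K₁ = M.withDensity f`,
`K₀ = M.withDensity (2 − f)`. Fix `p ∈ (0,1)`, set `K̄_p = p·K₁ + (1−p)·K₀` and
`j_p z = p·f z/(p·f z + (1−p)·(2−f z)) − p`. Then
`∫ min(j_p z² + ‖z‖², 1) dK̄_p ≤ 4·∫ (1 − √(f(2−f))) dK̄_p + 2·∫ min(‖z‖², 1) dK̄_p`. -/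
theorem stmt9 {d : ℕ}
    (K₁ K₀ : Measure (Fin d → ℝ)) [IsFiniteMeasure K₁] [IsFiniteMeasure K₀]
    (M : Measure (Fin d → ℝ)) (hM : M = (1/2 : ℝ≥0∞) • (K₁ + K₀))
    (f : (Fin d → ℝ) → ℝ) (hf : Measurable f)
    (hf0 : ∀ z, 0 ≤ f z) (hf2 : ∀ z, f z ≤ 2)
    (hK₁ : K₁ = M.withDensity (fun z => ENNReal.ofReal (f z)))
    (hK₀ : K₀ = M.withDensity (fun z => ENNReal.ofReal (2 - f z)))
    (p : ℝ) (hp0 : 0 < p) (hp1 : p < 1)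
    (Kbar : Measure (Fin d → ℝ))
    (hKbar : Kbar = ENNReal.ofReal p • K₁ + ENNReal.ofReal (1 - p) • K₀)
    (j : (Fin d → ℝ) → ℝ)
    (hj : ∀ z, j z = p * f z / (p * f z + (1 - p) * (2 - f z)) - p) :
    ∫ z, min (j z ^ 2 + ‖z‖ ^ 2) 1 ∂Kbar
      ≤ 4 * ∫ z, (1 - Real.sqrt (f z * (2 - f z))) ∂Kbar
        + 2 * ∫ z, min (‖z‖ ^ 2) 1 ∂Kbar := by
  haveI : IsFiniteMeasure Kbar := by
    constructor
    rw [hKbar]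
    simp only [Measure.add_apply, Measure.smul_apply, smul_eq_mul]
    exact ENNReal.add_lt_top.2 ⟨ENNReal.mul_lt_top ENNReal.ofReal_lt_top (measure_lt_top _ _),
      ENNReal.mul_lt_top ENNReal.ofReal_lt_top (measure_lt_top _ _)⟩
  -- measurability of j
  have hjm : Measurable j := by
    have : j = fun z => p * f z / (p * f z + (1 - p) * (2 - f z)) - p := funext hj
    rw [this]
    exact ((hf.const_mul p).div
      ((hf.const_mul p).add ((measurable_const.sub hf).const_mul (1 - p)))).sub measurable_const
  -- pointwise bound
  have key : ∀ z, min (j z ^ 2 + ‖z‖ ^ 2) 1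
      ≤ 4 * (1 - Real.sqrt (f z * (2 - f z))) + 2 * min (‖z‖ ^ 2) 1 := by
    intro z
    set t := f z with ht
    have ht0 : 0 ≤ t := hf0 z
    have ht2 : t ≤ 2 := hf2 z
    have h2p : 2 * p * (1 - p) ≤ p * t + (1 - p) * (2 - t) := by
      nlinarith [mul_nonneg (by linarith : (0:ℝ) ≤ 2 - t) (sq_nonneg (1 - p)),
        mul_nonneg ht0 (sq_nonneg p)]
    have h2p0 : 0 < 2 * p * (1 - p) := by
      have := mul_pos (mul_pos (by norm_num : (0:ℝ) < 2) hp0) (by linarith : (0:ℝ) < 1 - p)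
      linarith [this]
    have hD : 0 < p * t + (1 - p) * (2 - t) := lt_of_lt_of_le h2p0 h2p
    have hjD : j z * (p * t + (1 - p) * (2 - t)) = 2 * p * (1 - p) * (t - 1) := by
      rw [hj z, ← ht]
      field_simp
      ring
    have hj2 : j z ^ 2 ≤ (t - 1) ^ 2 := by
      have h1 : (j z * (p * t + (1 - p) * (2 - t))) ^ 2 = (2 * p * (1 - p) * (t - 1)) ^ 2 := by
        rw [hjD]
      have hle : j z ^ 2 * (p * t + (1 - p) * (2 - t)) ^ 2
          ≤ (t - 1) ^ 2 * (p * t + (1 - p) * (2 - t)) ^ 2 := by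
        nlinarith [h1, mul_nonneg (mul_nonneg (sq_nonneg (t - 1)) (by linarith :
          (0:ℝ) ≤ p * t + (1 - p) * (2 - t) - 2 * p * (1 - p))) (by linarith :
          (0:ℝ) ≤ p * t + (1 - p) * (2 - t) + 2 * p * (1 - p))]
      exact le_of_mul_le_mul_right hle (by positivity)
    have hs0 : 0 ≤ Real.sqrt (t * (2 - t)) := Real.sqrt_nonneg _
    have hs2 : Real.sqrt (t * (2 - t)) ^ 2 = t * (2 - t) :=
      Real.sq_sqrt (by nlinarith)
    have hhell : (t - 1) ^ 2 ≤ 4 * (1 - Real.sqrt (t * (2 - t))) := by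
      nlinarith [sq_nonneg (Real.sqrt (t * (2 - t)) - 1), sq_nonneg (t - 1)]
    have hmin0 : 0 ≤ min (‖z‖ ^ 2) 1 := le_min (by positivity) zero_le_one
    have hstep : min (j z ^ 2 + ‖z‖ ^ 2) 1 ≤ j z ^ 2 + min (‖z‖ ^ 2) 1 := by
      rcases le_total (‖z‖ ^ 2) 1 with h | h
      · rw [min_eq_left h]; exact min_le_left _ _
      · rw [min_eq_right h]
        calc min (j z ^ 2 + ‖z‖ ^ 2) 1 ≤ 1 := min_le_right _ _
        _ ≤ j z ^ 2 + 1 := by nlinarith [sq_nonneg (j z)]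
    calc min (j z ^ 2 + ‖z‖ ^ 2) 1 ≤ j z ^ 2 + min (‖z‖ ^ 2) 1 := hstep
      _ ≤ 4 * (1 - Real.sqrt (t * (2 - t))) + 2 * min (‖z‖ ^ 2) 1 := by
          have := hj2.trans hhell
          linarith
  -- integrability
  have hmeas1 : Measurable fun z : Fin d → ℝ => min (j z ^ 2 + ‖z‖ ^ 2) 1 :=
    ((hjm.pow_const 2).add (measurable_norm.pow_const 2)).min measurable_const
  have hmeas2 : Measurable fun z : Fin d → ℝ => 1 - Real.sqrt (f z * (2 - f z)) :=
    measurable_const.sub (hf.mul (measurable_const.sub hf)).sqrt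
  have hmeas3 : Measurable fun z : Fin d → ℝ => min (‖z‖ ^ 2) 1 :=
    (measurable_norm.pow_const 2).min measurable_const
  have hint1 : Integrable (fun z => min (j z ^ 2 + ‖z‖ ^ 2) 1) Kbar := by
    refine (integrable_const (1 : ℝ)).mono' hmeas1.aestronglyMeasurable (ae_of_all _ fun z => ?_)
    have h0 : (0:ℝ) ≤ min (j z ^ 2 + ‖z‖ ^ 2) 1 := le_min (by positivity) zero_le_one
    rw [Real.norm_eq_abs, abs_of_nonneg h0]
    simpa using min_le_right (j z ^ 2 + ‖z‖ ^ 2) 1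
  have hint2 : Integrable (fun z => 1 - Real.sqrt (f z * (2 - f z))) Kbar := by
    refine (integrable_const (1 : ℝ)).mono' hmeas2.aestronglyMeasurable (ae_of_all _ fun z => ?_)
    have hs0 : 0 ≤ Real.sqrt (f z * (2 - f z)) := Real.sqrt_nonneg _
    have hs1 : Real.sqrt (f z * (2 - f z)) ≤ 1 := by
      rw [show (1:ℝ) = Real.sqrt 1 by simp]
      exact Real.sqrt_le_sqrt (by nlinarith [hf0 z, hf2 z, sq_nonneg (f z - 1)])
    rw [Real.norm_eq_abs, abs_of_nonneg (by linarith)]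
    simpa using hs0
  have hint3 : Integrable (fun z => min (‖z‖ ^ 2) 1) Kbar := by
    refine (integrable_const (1 : ℝ)).mono' hmeas3.aestronglyMeasurable (ae_of_all _ fun z => ?_)
    have h0 : (0:ℝ) ≤ min (‖z‖ ^ 2) 1 := le_min (by positivity) zero_le_one
    rw [Real.norm_eq_abs, abs_of_nonneg h0]
    simpa using min_le_right (‖z‖ ^ 2) 1
  have hrhs : Integrable
      (fun z => 4 * (1 - Real.sqrt (f z * (2 - f z))) + 2 * min (‖z‖ ^ 2) 1) Kbar :=
    (hint2.const_mul 4).add (hint3.const_mul 2)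
  calc ∫ z, min (j z ^ 2 + ‖z‖ ^ 2) 1 ∂Kbar
      ≤ ∫ z, (4 * (1 - Real.sqrt (f z * (2 - f z))) + 2 * min (‖z‖ ^ 2) 1) ∂Kbar :=
        integral_mono hint1 hrhs key
    _ = 4 * ∫ z, (1 - Real.sqrt (f z * (2 - f z))) ∂Kbar
        + 2 * ∫ z, min (‖z‖ ^ 2) 1 ∂Kbar := by
        rw [integral_add (hint2.const_mul 4) (hint3.const_mul 2),
          integral_const_mul, integral_const_mul]
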